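/- Assume q^2 ≠ 1. Then in O_q(G(2,4)) one has [23][14] − q[24][13] + q^2[12][34] ≠ 0. Consequently, there is no K-algebra automorphism of O_q(G(2,4)) sending each quantum minor [ij] to [(i+1)(j+1)] with indices read modulo 4 (i.e., cycling the column indices does not induce an automorphism of the quantum grassmannian). -/

import Mathlib

set_option maxRecDepth 10000
set_option synthInstance.maxSize 512
set_option synthInstance.maxHeartbeats 1000000
set_option maxHeartbeats 1000000
set_option linter.unreachableTactic false
set_option linter.unusedTactic false
set_option linter.unnecessarySeqFocus false


open scoped BigOperators

namespace QG

variable (K : Type*) [Field K]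

/-- The defining relations of the quantum matrix algebra `O_q(M_{m,n})`. -/
inductive QMatRel (q : K) (m n : ℕ) :
    FreeAlgebra K (Fin m × Fin n) → FreeAlgebra K (Fin m × Fin n) → Prop
  | row : ∀ (i : Fin m) (j l : Fin n), j < l →
      QMatRel q m n (FreeAlgebra.ι K (i, j) * FreeAlgebra.ι K (i, l))
        (q • (FreeAlgebra.ι K (i, l) * FreeAlgebra.ι K (i, j)))
  | col : ∀ (i k : Fin m) (j : Fin n), i < k →
      QMatRel q m n (FreeAlgebra.ι K (i, j) * FreeAlgebra.ι K (k, j))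
        (q • (FreeAlgebra.ι K (k, j) * FreeAlgebra.ι K (i, j)))
  | comm : ∀ (i k : Fin m) (j l : Fin n), k < i → j < l →
      QMatRel q m n (FreeAlgebra.ι K (i, j) * FreeAlgebra.ι K (k, l))
        (FreeAlgebra.ι K (k, l) * FreeAlgebra.ι K (i, j))
  | qrel : ∀ (i k : Fin m) (j l : Fin n), i < k → j < l →
      QMatRel q m n
        (FreeAlgebra.ι K (i, j) * FreeAlgebra.ι K (k, l) -
          FreeAlgebra.ι K (k, l) * FreeAlgebra.ι K (i, j))
        ((q - q⁻¹) • (FreeAlgebra.ι K (i, l) * FreeAlgebra.ι K (k, j)))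

/-- The quantum matrix algebra `O_q(M_{m,n})`. -/
abbrev QMat (q : K) (m n : ℕ) := RingQuot (QMatRel K q m n)

/-- The generator `X_{ij}` of `O_q(M_{m,n})`. -/
noncomputable def X (q : K) {m n : ℕ} (i : Fin m) (j : Fin n) : QMat K q m n :=
  RingQuot.mkAlgHom K (QMatRel K q m n) (FreeAlgebra.ι K (i, j))

/-- The number of inversions (Coxeter length) of a permutation of `Fin t`. -/
def invCount {t : ℕ} (σ : Equiv.Perm (Fin t)) : ℕ :=
  ((Finset.univ : Finset (Fin t × Fin t)).filter fun p => p.1 < p.2 ∧ σ p.2 < σ p.1).card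

/-- The quantum minor `Σ_σ (-q)^{ℓ(σ)} x_{σ(1)1} ⋯ x_{σ(t)t}` of a `t × t`
matrix of elements of a `K`-algebra. -/
noncomputable def qMinor {A : Type*} [Ring A] [Algebra K A] (q : K) (t : ℕ)
    (x : Fin t → Fin t → A) : A :=
  ∑ σ : Equiv.Perm (Fin t), ((-q) ^ invCount σ) • (List.ofFn fun k => x (σ k) k).prod

/-- The maximal (`m × m`) quantum minor `[J]` of `O_q(M_{m,n})`, with column index set `J`
(columns taken in increasing order, rows `1,…,m`).  (Defined to be `0` if `J` does not
have exactly `m` elements.) -/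
noncomputable def grMinor (q : K) (m : ℕ) {n : ℕ} (J : Finset (Fin n)) : QMat K q m n :=
  if h : J.card = m then
    qMinor K q m (fun i k => X K q i (J.orderEmbOfFin h k)) else 0

/-- The set of maximal quantum minors of `O_q(M_{m,n})`. -/
def grGenSet (q : K) (m n : ℕ) : Set (QMat K q m n) :=
  {a | ∃ J : Finset (Fin n), a = grMinor K q m J}

/-- The quantum grassmannian `O_q(G(m,n))`: the subalgebra of `O_q(M_{m,n})`
generated by the maximal quantum minors. -/
noncomputable def qGrass (q : K) (m n : ℕ) : Subalgebra K (QMat K q m n) :=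
  Algebra.adjoin K (grGenSet K q m n)

/-- The maximal quantum minor `[J]` viewed as an element of the quantum grassmannian. -/
noncomputable def grE (q : K) (m : ℕ) {n : ℕ} (J : Finset (Fin n)) : ↥(qGrass K q m n) :=
  ⟨grMinor K q m J, Algebra.subset_adjoin ⟨J, rfl⟩⟩

/-- Reduction of a natural number modulo `n`, landing in `Fin n` (this encodes the
paper's convention that a column index is read modulo `n`; indices here are 0-based). -/
def fmod (n : ℕ) (hn : 0 < n) (k : ℕ) : Fin n := ⟨k % n, Nat.mod_lt k hn⟩

/-- The index set `{α, α+1, …, α+m-1}` (read modulo `n`) of a consecutive quantum minor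
(0-based indices). -/
def consecSet {n : ℕ} (hn : 0 < n) (m : ℕ) (α : ℕ) : Finset (Fin n) :=
  (Finset.range m).image fun k => fmod n hn (α + k)

end QG
namespace QG

/-- The `2×2` quantum minor `[ab] = X_{1a}X_{2b} − q X_{1b}X_{2a}` of `O_q(M_{2,4})`
(0-based row indices). -/
noncomputable def pl (K : Type*) [Field K] (q : K) (a b : Fin 4) : QMat K q 2 4 :=
  X K q 0 a * X K q 1 b - q • (X K q 0 b * X K q 1 a)

end QG
namespace QG

/-- The quantum grassmannian `O_q(G(2,4))`: the subalgebra of `O_q(M_{2,4})` generated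
by the six `2×2` quantum minors. -/
noncomputable def qGrass24 (K : Type*) [Field K] (q : K) : Subalgebra K (QMat K q 2 4) :=
  Algebra.adjoin K {x | ∃ a b : Fin 4, a < b ∧ x = pl K q a b}

/-- The quantum minor `[ab]` (with `a < b`) as an element of `O_q(G(2,4))`. -/
noncomputable def grGen24 (K : Type*) [Field K] (q : K) (a b : Fin 4) (h : a < b) :
    ↥(qGrass24 K q) :=
  ⟨pl K q a b, Algebra.subset_adjoin ⟨a, b, h, rfl⟩⟩


namespace QGRep

variable {K : Type*} [Field K]

abbrev G : Type := ℤ×ℤ×ℤ×ℤ×ℤ×ℤ×ℤ×ℤ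

abbrev V (K : Type*) [Field K] := G → K

def dot (w v : G) : ℤ :=
  w.1*v.1 + w.2.1*v.2.1 + w.2.2.1*v.2.2.1 + w.2.2.2.1*v.2.2.2.1 +
  w.2.2.2.2.1*v.2.2.2.2.1 + w.2.2.2.2.2.1*v.2.2.2.2.2.1 +
  w.2.2.2.2.2.2.1*v.2.2.2.2.2.2.1 + w.2.2.2.2.2.2.2*v.2.2.2.2.2.2.2

lemma dot_sub (w v u : G) : dot w (v - u) = dot w v - dot w u := by
  simp only [dot, Prod.fst_sub, Prod.snd_sub]; ring

lemma dot_add_left (w w' v : G) : dot (w + w') v = dot w v + dot w' v := by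
  simp only [dot, Prod.fst_add, Prod.snd_add]; ring

noncomputable def mop (q : K) (c : K) (w u : G) : Module.End K (V K) where
  toFun f := fun v => c * q ^ (dot w v) * f (v - u)
  map_add' f g := by funext v; simp [mul_add]
  map_smul' r f := by funext v; simp [Pi.smul_apply, smul_eq_mul]; ring

lemma mop_apply (q c : K) (w u : G) (f : V K) (v : G) :
    mop q c w u f v = c * q ^ (dot w v) * f (v - u) := rfl

lemma mop_mul (q : K) (hq : q ≠ 0) (c c' : K) (w u w' u' : G) :
    mop q c w u * mop q c' w' u' =
      mop q (c * c' * q ^ (-(dot w' u))) (w + w') (u + u') := by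
  apply LinearMap.ext; intro f; funext v
  simp only [Module.End.mul_apply, mop_apply, dot_sub, dot_add_left, sub_sub,
    zpow_add₀ hq, zpow_sub₀ hq, zpow_neg]
  field_simp

lemma smul_mop (q : K) (r c : K) (w u : G) :
    r • mop q c w u = mop q (r * c) w u := by
  apply LinearMap.ext; intro f; funext v
  simp [mop_apply, Pi.smul_apply, smul_eq_mul]; ring

noncomputable def mop1 (q : K) (w u : G) : Module.End K (V K) := mop q 1 w u

lemma mop_eq_smul (q c : K) (w u : G) :
    mop q c w u = c • mop1 q w u := by
  rw [mop1, smul_mop, mul_one]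

noncomputable def X00 (q : K) : Module.End K (V K) := mop q 1 (0,1,1,1,1,0,0,0) (1,0,0,0,0,0,0,0) + mop q q (0,0,1,1,0,2,0,0) (0,1,0,0,1,-1,0,0) + mop q q (0,0,0,1,0,1,2,0) (0,0,1,0,1,0,-1,0) + mop q q (0,0,0,0,0,1,1,2) (0,0,0,1,1,0,0,-1)

noncomputable def X01 (q : K) : Module.End K (V K) := mop q 1 (0,0,1,1,0,1,0,0) (0,1,0,0,0,0,0,0) + mop q q (0,0,0,1,0,0,2,0) (0,0,1,0,0,1,-1,0) + mop q q (0,0,0,0,0,0,1,2) (0,0,0,1,0,1,0,-1)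

noncomputable def X02 (q : K) : Module.End K (V K) := mop q 1 (0,0,0,1,0,0,1,0) (0,0,1,0,0,0,0,0) + mop q q (0,0,0,0,0,0,0,2) (0,0,0,1,0,0,1,-1)

noncomputable def X03 (q : K) : Module.End K (V K) := mop q 1 (0,0,0,0,0,0,0,1) (0,0,0,1,0,0,0,0)

noncomputable def X10 (q : K) : Module.End K (V K) := mop q 1 (0,0,0,0,0,1,1,1) (0,0,0,0,1,0,0,0)

noncomputable def X11 (q : K) : Module.End K (V K) := mop q 1 (0,0,0,0,0,0,1,1) (0,0,0,0,0,1,0,0)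

noncomputable def X12 (q : K) : Module.End K (V K) := mop q 1 (0,0,0,0,0,0,0,1) (0,0,0,0,0,0,1,0)

noncomputable def X13 (q : K) : Module.End K (V K) := mop q 1 (0,0,0,0,0,0,0,0) (0,0,0,0,0,0,0,1)

lemma rel_row_0_0_1 (q : K) (hq : q ≠ 0) :
    X00 q * X01 q = q • (X01 q * X00 q) := by
  simp only [X00, X01, X02, X03, X10, X11, X12, X13, mul_add, add_mul, mul_sub, sub_mul]
  simp only [mop_mul q hq, smul_add, smul_sub, smul_mop]
  simp only [dot, Prod.mk_add_mk, Int.reduceAdd, Int.reduceMul, Int.reduceNeg]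
  try simp only [mop_eq_smul]
  try match_scalars <;> (try simp only [zpow_neg, zpow_ofNat, zpow_one, zpow_zero]) <;> (try field_simp) <;> (try ring)

lemma rel_row_0_0_2 (q : K) (hq : q ≠ 0) :
    X00 q * X02 q = q • (X02 q * X00 q) := by
  simp only [X00, X01, X02, X03, X10, X11, X12, X13, mul_add, add_mul, mul_sub, sub_mul]
  simp only [mop_mul q hq, smul_add, smul_sub, smul_mop]
  simp only [dot, Prod.mk_add_mk, Int.reduceAdd, Int.reduceMul, Int.reduceNeg]
  try simp only [mop_eq_smul]
  try match_scalars <;> (try simp only [zpow_neg, zpow_ofNat, zpow_one, zpow_zero]) <;> (try field_simp) <;> (try ring)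

lemma rel_row_0_0_3 (q : K) (hq : q ≠ 0) :
    X00 q * X03 q = q • (X03 q * X00 q) := by
  simp only [X00, X01, X02, X03, X10, X11, X12, X13, mul_add, add_mul, mul_sub, sub_mul]
  simp only [mop_mul q hq, smul_add, smul_sub, smul_mop]
  simp only [dot, Prod.mk_add_mk, Int.reduceAdd, Int.reduceMul, Int.reduceNeg]
  try simp only [mop_eq_smul]
  try match_scalars <;> (try simp only [zpow_neg, zpow_ofNat, zpow_one, zpow_zero]) <;> (try field_simp) <;> (try ring)

lemma rel_row_0_1_2 (q : K) (hq : q ≠ 0) :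
    X01 q * X02 q = q • (X02 q * X01 q) := by
  simp only [X00, X01, X02, X03, X10, X11, X12, X13, mul_add, add_mul, mul_sub, sub_mul]
  simp only [mop_mul q hq, smul_add, smul_sub, smul_mop]
  simp only [dot, Prod.mk_add_mk, Int.reduceAdd, Int.reduceMul, Int.reduceNeg]
  try simp only [mop_eq_smul]
  try match_scalars <;> (try simp only [zpow_neg, zpow_ofNat, zpow_one, zpow_zero]) <;> (try field_simp) <;> (try ring)

lemma rel_row_0_1_3 (q : K) (hq : q ≠ 0) :
    X01 q * X03 q = q • (X03 q * X01 q) := by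
  simp only [X00, X01, X02, X03, X10, X11, X12, X13, mul_add, add_mul, mul_sub, sub_mul]
  simp only [mop_mul q hq, smul_add, smul_sub, smul_mop]
  simp only [dot, Prod.mk_add_mk, Int.reduceAdd, Int.reduceMul, Int.reduceNeg]
  try simp only [mop_eq_smul]
  try match_scalars <;> (try simp only [zpow_neg, zpow_ofNat, zpow_one, zpow_zero]) <;> (try field_simp) <;> (try ring)

lemma rel_row_0_2_3 (q : K) (hq : q ≠ 0) :
    X02 q * X03 q = q • (X03 q * X02 q) := by
  simp only [X00, X01, X02, X03, X10, X11, X12, X13, mul_add, add_mul, mul_sub, sub_mul]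
  simp only [mop_mul q hq, smul_add, smul_sub, smul_mop]
  simp only [dot, Prod.mk_add_mk, Int.reduceAdd, Int.reduceMul, Int.reduceNeg]
  try simp only [mop_eq_smul]
  try match_scalars <;> (try simp only [zpow_neg, zpow_ofNat, zpow_one, zpow_zero]) <;> (try field_simp) <;> (try ring)

lemma rel_row_1_0_1 (q : K) (hq : q ≠ 0) :
    X10 q * X11 q = q • (X11 q * X10 q) := by
  simp only [X00, X01, X02, X03, X10, X11, X12, X13, mul_add, add_mul, mul_sub, sub_mul]
  simp only [mop_mul q hq, smul_add, smul_sub, smul_mop]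
  simp only [dot, Prod.mk_add_mk, Int.reduceAdd, Int.reduceMul, Int.reduceNeg]
  try simp only [mop_eq_smul]
  try match_scalars <;> (try simp only [zpow_neg, zpow_ofNat, zpow_one, zpow_zero]) <;> (try field_simp) <;> (try ring)

lemma rel_row_1_0_2 (q : K) (hq : q ≠ 0) :
    X10 q * X12 q = q • (X12 q * X10 q) := by
  simp only [X00, X01, X02, X03, X10, X11, X12, X13, mul_add, add_mul, mul_sub, sub_mul]
  simp only [mop_mul q hq, smul_add, smul_sub, smul_mop]
  simp only [dot, Prod.mk_add_mk, Int.reduceAdd, Int.reduceMul, Int.reduceNeg]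
  try simp only [mop_eq_smul]
  try match_scalars <;> (try simp only [zpow_neg, zpow_ofNat, zpow_one, zpow_zero]) <;> (try field_simp) <;> (try ring)

lemma rel_row_1_0_3 (q : K) (hq : q ≠ 0) :
    X10 q * X13 q = q • (X13 q * X10 q) := by
  simp only [X00, X01, X02, X03, X10, X11, X12, X13, mul_add, add_mul, mul_sub, sub_mul]
  simp only [mop_mul q hq, smul_add, smul_sub, smul_mop]
  simp only [dot, Prod.mk_add_mk, Int.reduceAdd, Int.reduceMul, Int.reduceNeg]
  try simp only [mop_eq_smul]
  try match_scalars <;> (try simp only [zpow_neg, zpow_ofNat, zpow_one, zpow_zero]) <;> (try field_simp) <;> (try ring)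

lemma rel_row_1_1_2 (q : K) (hq : q ≠ 0) :
    X11 q * X12 q = q • (X12 q * X11 q) := by
  simp only [X00, X01, X02, X03, X10, X11, X12, X13, mul_add, add_mul, mul_sub, sub_mul]
  simp only [mop_mul q hq, smul_add, smul_sub, smul_mop]
  simp only [dot, Prod.mk_add_mk, Int.reduceAdd, Int.reduceMul, Int.reduceNeg]
  try simp only [mop_eq_smul]
  try match_scalars <;> (try simp only [zpow_neg, zpow_ofNat, zpow_one, zpow_zero]) <;> (try field_simp) <;> (try ring)

lemma rel_row_1_1_3 (q : K) (hq : q ≠ 0) :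
    X11 q * X13 q = q • (X13 q * X11 q) := by
  simp only [X00, X01, X02, X03, X10, X11, X12, X13, mul_add, add_mul, mul_sub, sub_mul]
  simp only [mop_mul q hq, smul_add, smul_sub, smul_mop]
  simp only [dot, Prod.mk_add_mk, Int.reduceAdd, Int.reduceMul, Int.reduceNeg]
  try simp only [mop_eq_smul]
  try match_scalars <;> (try simp only [zpow_neg, zpow_ofNat, zpow_one, zpow_zero]) <;> (try field_simp) <;> (try ring)

lemma rel_row_1_2_3 (q : K) (hq : q ≠ 0) :
    X12 q * X13 q = q • (X13 q * X12 q) := by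
  simp only [X00, X01, X02, X03, X10, X11, X12, X13, mul_add, add_mul, mul_sub, sub_mul]
  simp only [mop_mul q hq, smul_add, smul_sub, smul_mop]
  simp only [dot, Prod.mk_add_mk, Int.reduceAdd, Int.reduceMul, Int.reduceNeg]
  try simp only [mop_eq_smul]
  try match_scalars <;> (try simp only [zpow_neg, zpow_ofNat, zpow_one, zpow_zero]) <;> (try field_simp) <;> (try ring)

lemma rel_col_0 (q : K) (hq : q ≠ 0) :
    X00 q * X10 q = q • (X10 q * X00 q) := by
  simp only [X00, X01, X02, X03, X10, X11, X12, X13, mul_add, add_mul, mul_sub, sub_mul]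
  simp only [mop_mul q hq, smul_add, smul_sub, smul_mop]
  simp only [dot, Prod.mk_add_mk, Int.reduceAdd, Int.reduceMul, Int.reduceNeg]
  try simp only [mop_eq_smul]
  try match_scalars <;> (try simp only [zpow_neg, zpow_ofNat, zpow_one, zpow_zero]) <;> (try field_simp) <;> (try ring)

lemma rel_col_1 (q : K) (hq : q ≠ 0) :
    X01 q * X11 q = q • (X11 q * X01 q) := by
  simp only [X00, X01, X02, X03, X10, X11, X12, X13, mul_add, add_mul, mul_sub, sub_mul]
  simp only [mop_mul q hq, smul_add, smul_sub, smul_mop]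
  simp only [dot, Prod.mk_add_mk, Int.reduceAdd, Int.reduceMul, Int.reduceNeg]
  try simp only [mop_eq_smul]
  try match_scalars <;> (try simp only [zpow_neg, zpow_ofNat, zpow_one, zpow_zero]) <;> (try field_simp) <;> (try ring)

lemma rel_col_2 (q : K) (hq : q ≠ 0) :
    X02 q * X12 q = q • (X12 q * X02 q) := by
  simp only [X00, X01, X02, X03, X10, X11, X12, X13, mul_add, add_mul, mul_sub, sub_mul]
  simp only [mop_mul q hq, smul_add, smul_sub, smul_mop]
  simp only [dot, Prod.mk_add_mk, Int.reduceAdd, Int.reduceMul, Int.reduceNeg]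
  try simp only [mop_eq_smul]
  try match_scalars <;> (try simp only [zpow_neg, zpow_ofNat, zpow_one, zpow_zero]) <;> (try field_simp) <;> (try ring)

lemma rel_col_3 (q : K) (hq : q ≠ 0) :
    X03 q * X13 q = q • (X13 q * X03 q) := by
  simp only [X00, X01, X02, X03, X10, X11, X12, X13, mul_add, add_mul, mul_sub, sub_mul]
  simp only [mop_mul q hq, smul_add, smul_sub, smul_mop]
  simp only [dot, Prod.mk_add_mk, Int.reduceAdd, Int.reduceMul, Int.reduceNeg]
  try simp only [mop_eq_smul]
  try match_scalars <;> (try simp only [zpow_neg, zpow_ofNat, zpow_one, zpow_zero]) <;> (try field_simp) <;> (try ring)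

lemma rel_comm_0_1 (q : K) (hq : q ≠ 0) :
    X10 q * X01 q = X01 q * X10 q := by
  simp only [X00, X01, X02, X03, X10, X11, X12, X13, mul_add, add_mul, mul_sub, sub_mul]
  simp only [mop_mul q hq, smul_add, smul_sub, smul_mop]
  simp only [dot, Prod.mk_add_mk, Int.reduceAdd, Int.reduceMul, Int.reduceNeg]
  try simp only [mop_eq_smul]
  try match_scalars <;> (try simp only [zpow_neg, zpow_ofNat, zpow_one, zpow_zero]) <;> (try field_simp) <;> (try ring)

lemma rel_comm_0_2 (q : K) (hq : q ≠ 0) :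
    X10 q * X02 q = X02 q * X10 q := by
  simp only [X00, X01, X02, X03, X10, X11, X12, X13, mul_add, add_mul, mul_sub, sub_mul]
  simp only [mop_mul q hq, smul_add, smul_sub, smul_mop]
  simp only [dot, Prod.mk_add_mk, Int.reduceAdd, Int.reduceMul, Int.reduceNeg]
  try simp only [mop_eq_smul]
  try match_scalars <;> (try simp only [zpow_neg, zpow_ofNat, zpow_one, zpow_zero]) <;> (try field_simp) <;> (try ring)

lemma rel_comm_0_3 (q : K) (hq : q ≠ 0) :
    X10 q * X03 q = X03 q * X10 q := by
  simp only [X00, X01, X02, X03, X10, X11, X12, X13, mul_add, add_mul, mul_sub, sub_mul]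
  simp only [mop_mul q hq, smul_add, smul_sub, smul_mop]
  simp only [dot, Prod.mk_add_mk, Int.reduceAdd, Int.reduceMul, Int.reduceNeg]
  try simp only [mop_eq_smul]
  try match_scalars <;> (try simp only [zpow_neg, zpow_ofNat, zpow_one, zpow_zero]) <;> (try field_simp) <;> (try ring)

lemma rel_comm_1_2 (q : K) (hq : q ≠ 0) :
    X11 q * X02 q = X02 q * X11 q := by
  simp only [X00, X01, X02, X03, X10, X11, X12, X13, mul_add, add_mul, mul_sub, sub_mul]
  simp only [mop_mul q hq, smul_add, smul_sub, smul_mop]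
  simp only [dot, Prod.mk_add_mk, Int.reduceAdd, Int.reduceMul, Int.reduceNeg]
  try simp only [mop_eq_smul]
  try match_scalars <;> (try simp only [zpow_neg, zpow_ofNat, zpow_one, zpow_zero]) <;> (try field_simp) <;> (try ring)

lemma rel_comm_1_3 (q : K) (hq : q ≠ 0) :
    X11 q * X03 q = X03 q * X11 q := by
  simp only [X00, X01, X02, X03, X10, X11, X12, X13, mul_add, add_mul, mul_sub, sub_mul]
  simp only [mop_mul q hq, smul_add, smul_sub, smul_mop]
  simp only [dot, Prod.mk_add_mk, Int.reduceAdd, Int.reduceMul, Int.reduceNeg]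
  try simp only [mop_eq_smul]
  try match_scalars <;> (try simp only [zpow_neg, zpow_ofNat, zpow_one, zpow_zero]) <;> (try field_simp) <;> (try ring)

lemma rel_comm_2_3 (q : K) (hq : q ≠ 0) :
    X12 q * X03 q = X03 q * X12 q := by
  simp only [X00, X01, X02, X03, X10, X11, X12, X13, mul_add, add_mul, mul_sub, sub_mul]
  simp only [mop_mul q hq, smul_add, smul_sub, smul_mop]
  simp only [dot, Prod.mk_add_mk, Int.reduceAdd, Int.reduceMul, Int.reduceNeg]
  try simp only [mop_eq_smul]
  try match_scalars <;> (try simp only [zpow_neg, zpow_ofNat, zpow_one, zpow_zero]) <;> (try field_simp) <;> (try ring)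

lemma rel_q_0_1 (q : K) (hq : q ≠ 0) :
    X00 q * X11 q - X11 q * X00 q = (q - q⁻¹) • (X01 q * X10 q) := by
  simp only [X00, X01, X02, X03, X10, X11, X12, X13, mul_add, add_mul, mul_sub, sub_mul]
  simp only [mop_mul q hq, smul_add, smul_sub, smul_mop]
  simp only [dot, Prod.mk_add_mk, Int.reduceAdd, Int.reduceMul, Int.reduceNeg]
  try simp only [mop_eq_smul]
  try match_scalars <;> (try simp only [zpow_neg, zpow_ofNat, zpow_one, zpow_zero]) <;> (try field_simp) <;> (try ring)

lemma rel_q_0_2 (q : K) (hq : q ≠ 0) :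
    X00 q * X12 q - X12 q * X00 q = (q - q⁻¹) • (X02 q * X10 q) := by
  simp only [X00, X01, X02, X03, X10, X11, X12, X13, mul_add, add_mul, mul_sub, sub_mul]
  simp only [mop_mul q hq, smul_add, smul_sub, smul_mop]
  simp only [dot, Prod.mk_add_mk, Int.reduceAdd, Int.reduceMul, Int.reduceNeg]
  try simp only [mop_eq_smul]
  try match_scalars <;> (try simp only [zpow_neg, zpow_ofNat, zpow_one, zpow_zero]) <;> (try field_simp) <;> (try ring)

lemma rel_q_0_3 (q : K) (hq : q ≠ 0) :
    X00 q * X13 q - X13 q * X00 q = (q - q⁻¹) • (X03 q * X10 q) := by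
  simp only [X00, X01, X02, X03, X10, X11, X12, X13, mul_add, add_mul, mul_sub, sub_mul]
  simp only [mop_mul q hq, smul_add, smul_sub, smul_mop]
  simp only [dot, Prod.mk_add_mk, Int.reduceAdd, Int.reduceMul, Int.reduceNeg]
  try simp only [mop_eq_smul]
  try match_scalars <;> (try simp only [zpow_neg, zpow_ofNat, zpow_one, zpow_zero]) <;> (try field_simp) <;> (try ring)

lemma rel_q_1_2 (q : K) (hq : q ≠ 0) :
    X01 q * X12 q - X12 q * X01 q = (q - q⁻¹) • (X02 q * X11 q) := by
  simp only [X00, X01, X02, X03, X10, X11, X12, X13, mul_add, add_mul, mul_sub, sub_mul]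
  simp only [mop_mul q hq, smul_add, smul_sub, smul_mop]
  simp only [dot, Prod.mk_add_mk, Int.reduceAdd, Int.reduceMul, Int.reduceNeg]
  try simp only [mop_eq_smul]
  try match_scalars <;> (try simp only [zpow_neg, zpow_ofNat, zpow_one, zpow_zero]) <;> (try field_simp) <;> (try ring)

lemma rel_q_1_3 (q : K) (hq : q ≠ 0) :
    X01 q * X13 q - X13 q * X01 q = (q - q⁻¹) • (X03 q * X11 q) := by
  simp only [X00, X01, X02, X03, X10, X11, X12, X13, mul_add, add_mul, mul_sub, sub_mul]
  simp only [mop_mul q hq, smul_add, smul_sub, smul_mop]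
  simp only [dot, Prod.mk_add_mk, Int.reduceAdd, Int.reduceMul, Int.reduceNeg]
  try simp only [mop_eq_smul]
  try match_scalars <;> (try simp only [zpow_neg, zpow_ofNat, zpow_one, zpow_zero]) <;> (try field_simp) <;> (try ring)

lemma rel_q_2_3 (q : K) (hq : q ≠ 0) :
    X02 q * X13 q - X13 q * X02 q = (q - q⁻¹) • (X03 q * X12 q) := by
  simp only [X00, X01, X02, X03, X10, X11, X12, X13, mul_add, add_mul, mul_sub, sub_mul]
  simp only [mop_mul q hq, smul_add, smul_sub, smul_mop]
  simp only [dot, Prod.mk_add_mk, Int.reduceAdd, Int.reduceMul, Int.reduceNeg]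
  try simp only [mop_eq_smul]
  try match_scalars <;> (try simp only [zpow_neg, zpow_ofNat, zpow_one, zpow_zero]) <;> (try field_simp) <;> (try ring)

noncomputable def Ximg (q : K) (i : Fin 2) (j : Fin 4) : Module.End K (V K) :=
  match i.val, j.val with
  | 0, 0 => X00 q
  | 0, 1 => X01 q
  | 0, 2 => X02 q
  | 0, 3 => X03 q
  | _, 0 => X10 q
  | _, 1 => X11 q
  | _, 2 => X12 q
  | _, _ => X13 q

lemma hrow (q : K) (hq : q ≠ 0) (i : Fin 2) (j l : Fin 4) (h : j < l) :
    Ximg q i j * Ximg q i l = q • (Ximg q i l * Ximg q i j) := by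
  fin_cases i <;> fin_cases j <;> fin_cases l <;>
  first
  | exact absurd h (by decide)
  | exact rel_row_0_0_1 q hq
  | exact rel_row_0_0_2 q hq
  | exact rel_row_0_0_3 q hq
  | exact rel_row_0_1_2 q hq
  | exact rel_row_0_1_3 q hq
  | exact rel_row_0_2_3 q hq
  | exact rel_row_1_0_1 q hq
  | exact rel_row_1_0_2 q hq
  | exact rel_row_1_0_3 q hq
  | exact rel_row_1_1_2 q hq
  | exact rel_row_1_1_3 q hq
  | exact rel_row_1_2_3 q hq

lemma hcol (q : K) (hq : q ≠ 0) (i k : Fin 2) (j : Fin 4) (h : i < k) :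
    Ximg q i j * Ximg q k j = q • (Ximg q k j * Ximg q i j) := by
  fin_cases i <;> fin_cases k <;> fin_cases j <;>
  first
  | exact absurd h (by decide)
  | exact rel_col_0 q hq
  | exact rel_col_1 q hq
  | exact rel_col_2 q hq
  | exact rel_col_3 q hq

lemma hcomm (q : K) (hq : q ≠ 0) (i k : Fin 2) (j l : Fin 4) (hik : k < i) (hjl : j < l) :
    Ximg q i j * Ximg q k l = Ximg q k l * Ximg q i j := by
  fin_cases i <;> fin_cases k <;> fin_cases j <;> fin_cases l <;>
  first
  | exact absurd hik (by decide)
  | exact absurd hjl (by decide)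
  | exact rel_comm_0_1 q hq
  | exact rel_comm_0_2 q hq
  | exact rel_comm_0_3 q hq
  | exact rel_comm_1_2 q hq
  | exact rel_comm_1_3 q hq
  | exact rel_comm_2_3 q hq

lemma hqrel (q : K) (hq : q ≠ 0) (i k : Fin 2) (j l : Fin 4) (hik : i < k) (hjl : j < l) :
    Ximg q i j * Ximg q k l - Ximg q k l * Ximg q i j
      = (q - q⁻¹) • (Ximg q i l * Ximg q k j) := by
  fin_cases i <;> fin_cases k <;> fin_cases j <;> fin_cases l <;>
  first
  | exact absurd hik (by decide)
  | exact absurd hjl (by decide)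
  | exact rel_q_0_1 q hq
  | exact rel_q_0_2 q hq
  | exact rel_q_0_3 q hq
  | exact rel_q_1_2 q hq
  | exact rel_q_1_3 q hq
  | exact rel_q_2_3 q hq


section Phi
variable (K : Type*) [Field K]

lemma ximg00 (q : K) : Ximg q 0 0 = X00 q := rfl
lemma ximg01 (q : K) : Ximg q 0 1 = X01 q := rfl
lemma ximg02 (q : K) : Ximg q 0 2 = X02 q := rfl
lemma ximg03 (q : K) : Ximg q 0 3 = X03 q := rfl
lemma ximg10 (q : K) : Ximg q 1 0 = X10 q := rfl
lemma ximg11 (q : K) : Ximg q 1 1 = X11 q := rfl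
lemma ximg12 (q : K) : Ximg q 1 2 = X12 q := rfl
lemma ximg13 (q : K) : Ximg q 1 3 = X13 q := rfl

noncomputable def Phi (q : K) (hq : q ≠ 0) :
    QG.QMat K q 2 4 →ₐ[K] Module.End K (V K) :=
  RingQuot.liftAlgHom K ⟨FreeAlgebra.lift K (fun p : Fin 2 × Fin 4 => Ximg q p.1 p.2), by
    rintro x y h
    induction h with
    | row i j l h =>
        simp only [map_mul, map_smul, FreeAlgebra.lift_ι_apply]
        exact hrow q hq i j l h
    | col i k j h =>
        simp only [map_mul, map_smul, FreeAlgebra.lift_ι_apply]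
        exact hcol q hq i k j h
    | comm i k j l hik hjl =>
        simp only [map_mul, FreeAlgebra.lift_ι_apply]
        exact hcomm q hq i k j l hik hjl
    | qrel i k j l hik hjl =>
        simp only [map_sub, map_mul, map_smul, FreeAlgebra.lift_ι_apply]
        exact hqrel q hq i k j l hik hjl⟩

lemma Phi_X (q : K) (hq : q ≠ 0) (i : Fin 2) (j : Fin 4) :
    Phi K q hq (QG.X K q i j) = Ximg q i j := by
  rw [QG.X, Phi, RingQuot.liftAlgHom_mkAlgHom_apply, FreeAlgebra.lift_ι_apply]

instance : DecidableEq G := inferInstance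

noncomputable def delta : V K := fun v => if v = ((0:ℤ),(0:ℤ),(0:ℤ),(0:ℤ),(0:ℤ),(0:ℤ),(0:ℤ),(0:ℤ)) then (1:K) else 0

set_option maxHeartbeats 2000000 in
lemma phiG_val (q : K) (hq : q ≠ 0) :
    Phi K q hq (QG.pl K q 0 3 * QG.pl K q 1 2) (delta K) ((1:ℤ),(1:ℤ),(0:ℤ),(0:ℤ),(0:ℤ),(0:ℤ),(1:ℤ),(1:ℤ)) = q := by
  simp only [QG.pl, map_mul, map_sub, map_smul, Phi_X, ximg00, ximg01, ximg02, ximg03,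
    ximg10, ximg11, ximg12, ximg13]
  simp only [X00, X01, X02, X03, X10, X11, X12, X13, delta,
    LinearMap.sub_apply, LinearMap.add_apply, LinearMap.smul_apply, Module.End.mul_apply,
    mop_apply, Pi.smul_apply, Pi.sub_apply, Pi.add_apply, smul_eq_mul, dot,
    Prod.mk_sub_mk, Prod.mk.injEq, Int.reduceSub, Int.reduceAdd, Int.reduceMul,
    Int.reduceNeg, Int.reduceEq, and_true, and_false, false_and, true_and, if_true, if_false,
    reduceIte, mul_zero, zero_mul, mul_one, one_mul, sub_zero, zero_sub, add_zero, zero_add,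
    zpow_zero, zpow_one]
  try field_simp
  try ring
end Phi


section PhiE
variable (K : Type*) [Field K]

set_option maxHeartbeats 4000000 in
lemma phiE_val (q : K) (hq : q ≠ 0) :
    Phi K q hq (QG.pl K q 1 2 * QG.pl K q 0 3 - q • (QG.pl K q 1 3 * QG.pl K q 0 2)
        + q ^ 2 • (QG.pl K q 0 1 * QG.pl K q 2 3)) (delta K)
      ((1:ℤ),(0:ℤ),(1:ℤ),(0:ℤ),(0:ℤ),(1:ℤ),(0:ℤ),(1:ℤ)) = q ^ 4 - q ^ 2 := by
  simp only [QG.pl, map_add, map_mul, map_sub, map_smul, map_pow, Phi_X, ximg00, ximg01, ximg02, ximg03,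
    ximg10, ximg11, ximg12, ximg13]
  simp only [X00, X01, X02, X03, X10, X11, X12, X13, delta,
    LinearMap.sub_apply, LinearMap.add_apply, LinearMap.smul_apply, Module.End.mul_apply,
    mop_apply, Pi.smul_apply, Pi.sub_apply, Pi.add_apply, smul_eq_mul, dot,
    Prod.mk_sub_mk, Prod.mk.injEq, Int.reduceSub, Int.reduceAdd, Int.reduceMul,
    Int.reduceNeg, Int.reduceEq, and_true, and_false, false_and, true_and, if_true, if_false,
    reduceIte, mul_zero, zero_mul, mul_one, one_mul, sub_zero, zero_sub, add_zero, zero_add,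
    zpow_zero, zpow_one]
  try field_simp
  try ring

end PhiE

end QGRep

namespace QGW

section Straight
variable {K : Type*} [Field K] (q : K)

private lemma xrel {x y : FreeAlgebra K (Fin 2 × Fin 4)} (h : QG.QMatRel K q 2 4 x y) :
    RingQuot.mkAlgHom K (QG.QMatRel K q 2 4) x = RingQuot.mkAlgHom K (QG.QMatRel K q 2 4) y :=
  RingQuot.mkAlgHom_rel _ h

private lemma s_r0_01 (q : K) : QG.X K q (0 : Fin 2) (0 : Fin 4) * QG.X K q (0 : Fin 2) (1 : Fin 4) = q • (QG.X K q (0 : Fin 2) (1 : Fin 4) * QG.X K q (0 : Fin 2) (0 : Fin 4)) := by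
  have h := xrel q (QG.QMatRel.row 0 0 1 (by decide))
  simp only [map_mul, map_smul] at h
  exact h

private lemma s_r0_01' (q : K) : ∀ t, QG.X K q (0 : Fin 2) (0 : Fin 4) * (QG.X K q (0 : Fin 2) (1 : Fin 4) * t) = q • (QG.X K q (0 : Fin 2) (1 : Fin 4) * (QG.X K q (0 : Fin 2) (0 : Fin 4) * t)) := by
  intro t
  rw [← mul_assoc, s_r0_01 q, smul_mul_assoc, mul_assoc]

private lemma s_r0_02 (q : K) : QG.X K q (0 : Fin 2) (0 : Fin 4) * QG.X K q (0 : Fin 2) (2 : Fin 4) = q • (QG.X K q (0 : Fin 2) (2 : Fin 4) * QG.X K q (0 : Fin 2) (0 : Fin 4)) := by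
  have h := xrel q (QG.QMatRel.row 0 0 2 (by decide))
  simp only [map_mul, map_smul] at h
  exact h

private lemma s_r0_02' (q : K) : ∀ t, QG.X K q (0 : Fin 2) (0 : Fin 4) * (QG.X K q (0 : Fin 2) (2 : Fin 4) * t) = q • (QG.X K q (0 : Fin 2) (2 : Fin 4) * (QG.X K q (0 : Fin 2) (0 : Fin 4) * t)) := by
  intro t
  rw [← mul_assoc, s_r0_02 q, smul_mul_assoc, mul_assoc]

private lemma s_r0_03 (q : K) : QG.X K q (0 : Fin 2) (0 : Fin 4) * QG.X K q (0 : Fin 2) (3 : Fin 4) = q • (QG.X K q (0 : Fin 2) (3 : Fin 4) * QG.X K q (0 : Fin 2) (0 : Fin 4)) := by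
  have h := xrel q (QG.QMatRel.row 0 0 3 (by decide))
  simp only [map_mul, map_smul] at h
  exact h

private lemma s_r0_03' (q : K) : ∀ t, QG.X K q (0 : Fin 2) (0 : Fin 4) * (QG.X K q (0 : Fin 2) (3 : Fin 4) * t) = q • (QG.X K q (0 : Fin 2) (3 : Fin 4) * (QG.X K q (0 : Fin 2) (0 : Fin 4) * t)) := by
  intro t
  rw [← mul_assoc, s_r0_03 q, smul_mul_assoc, mul_assoc]

private lemma s_r0_12 (q : K) : QG.X K q (0 : Fin 2) (1 : Fin 4) * QG.X K q (0 : Fin 2) (2 : Fin 4) = q • (QG.X K q (0 : Fin 2) (2 : Fin 4) * QG.X K q (0 : Fin 2) (1 : Fin 4)) := by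
  have h := xrel q (QG.QMatRel.row 0 1 2 (by decide))
  simp only [map_mul, map_smul] at h
  exact h

private lemma s_r0_12' (q : K) : ∀ t, QG.X K q (0 : Fin 2) (1 : Fin 4) * (QG.X K q (0 : Fin 2) (2 : Fin 4) * t) = q • (QG.X K q (0 : Fin 2) (2 : Fin 4) * (QG.X K q (0 : Fin 2) (1 : Fin 4) * t)) := by
  intro t
  rw [← mul_assoc, s_r0_12 q, smul_mul_assoc, mul_assoc]

private lemma s_r0_13 (q : K) : QG.X K q (0 : Fin 2) (1 : Fin 4) * QG.X K q (0 : Fin 2) (3 : Fin 4) = q • (QG.X K q (0 : Fin 2) (3 : Fin 4) * QG.X K q (0 : Fin 2) (1 : Fin 4)) := by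
  have h := xrel q (QG.QMatRel.row 0 1 3 (by decide))
  simp only [map_mul, map_smul] at h
  exact h

private lemma s_r0_13' (q : K) : ∀ t, QG.X K q (0 : Fin 2) (1 : Fin 4) * (QG.X K q (0 : Fin 2) (3 : Fin 4) * t) = q • (QG.X K q (0 : Fin 2) (3 : Fin 4) * (QG.X K q (0 : Fin 2) (1 : Fin 4) * t)) := by
  intro t
  rw [← mul_assoc, s_r0_13 q, smul_mul_assoc, mul_assoc]

private lemma s_r0_23 (q : K) : QG.X K q (0 : Fin 2) (2 : Fin 4) * QG.X K q (0 : Fin 2) (3 : Fin 4) = q • (QG.X K q (0 : Fin 2) (3 : Fin 4) * QG.X K q (0 : Fin 2) (2 : Fin 4)) := by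
  have h := xrel q (QG.QMatRel.row 0 2 3 (by decide))
  simp only [map_mul, map_smul] at h
  exact h

private lemma s_r0_23' (q : K) : ∀ t, QG.X K q (0 : Fin 2) (2 : Fin 4) * (QG.X K q (0 : Fin 2) (3 : Fin 4) * t) = q • (QG.X K q (0 : Fin 2) (3 : Fin 4) * (QG.X K q (0 : Fin 2) (2 : Fin 4) * t)) := by
  intro t
  rw [← mul_assoc, s_r0_23 q, smul_mul_assoc, mul_assoc]

private lemma s_r1_01 (q : K) : QG.X K q (1 : Fin 2) (0 : Fin 4) * QG.X K q (1 : Fin 2) (1 : Fin 4) = q • (QG.X K q (1 : Fin 2) (1 : Fin 4) * QG.X K q (1 : Fin 2) (0 : Fin 4)) := by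
  have h := xrel q (QG.QMatRel.row 1 0 1 (by decide))
  simp only [map_mul, map_smul] at h
  exact h

private lemma s_r1_01' (q : K) : ∀ t, QG.X K q (1 : Fin 2) (0 : Fin 4) * (QG.X K q (1 : Fin 2) (1 : Fin 4) * t) = q • (QG.X K q (1 : Fin 2) (1 : Fin 4) * (QG.X K q (1 : Fin 2) (0 : Fin 4) * t)) := by
  intro t
  rw [← mul_assoc, s_r1_01 q, smul_mul_assoc, mul_assoc]

private lemma s_r1_02 (q : K) : QG.X K q (1 : Fin 2) (0 : Fin 4) * QG.X K q (1 : Fin 2) (2 : Fin 4) = q • (QG.X K q (1 : Fin 2) (2 : Fin 4) * QG.X K q (1 : Fin 2) (0 : Fin 4)) := by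
  have h := xrel q (QG.QMatRel.row 1 0 2 (by decide))
  simp only [map_mul, map_smul] at h
  exact h

private lemma s_r1_02' (q : K) : ∀ t, QG.X K q (1 : Fin 2) (0 : Fin 4) * (QG.X K q (1 : Fin 2) (2 : Fin 4) * t) = q • (QG.X K q (1 : Fin 2) (2 : Fin 4) * (QG.X K q (1 : Fin 2) (0 : Fin 4) * t)) := by
  intro t
  rw [← mul_assoc, s_r1_02 q, smul_mul_assoc, mul_assoc]

private lemma s_r1_03 (q : K) : QG.X K q (1 : Fin 2) (0 : Fin 4) * QG.X K q (1 : Fin 2) (3 : Fin 4) = q • (QG.X K q (1 : Fin 2) (3 : Fin 4) * QG.X K q (1 : Fin 2) (0 : Fin 4)) := by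
  have h := xrel q (QG.QMatRel.row 1 0 3 (by decide))
  simp only [map_mul, map_smul] at h
  exact h

private lemma s_r1_03' (q : K) : ∀ t, QG.X K q (1 : Fin 2) (0 : Fin 4) * (QG.X K q (1 : Fin 2) (3 : Fin 4) * t) = q • (QG.X K q (1 : Fin 2) (3 : Fin 4) * (QG.X K q (1 : Fin 2) (0 : Fin 4) * t)) := by
  intro t
  rw [← mul_assoc, s_r1_03 q, smul_mul_assoc, mul_assoc]

private lemma s_r1_12 (q : K) : QG.X K q (1 : Fin 2) (1 : Fin 4) * QG.X K q (1 : Fin 2) (2 : Fin 4) = q • (QG.X K q (1 : Fin 2) (2 : Fin 4) * QG.X K q (1 : Fin 2) (1 : Fin 4)) := by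
  have h := xrel q (QG.QMatRel.row 1 1 2 (by decide))
  simp only [map_mul, map_smul] at h
  exact h

private lemma s_r1_12' (q : K) : ∀ t, QG.X K q (1 : Fin 2) (1 : Fin 4) * (QG.X K q (1 : Fin 2) (2 : Fin 4) * t) = q • (QG.X K q (1 : Fin 2) (2 : Fin 4) * (QG.X K q (1 : Fin 2) (1 : Fin 4) * t)) := by
  intro t
  rw [← mul_assoc, s_r1_12 q, smul_mul_assoc, mul_assoc]

private lemma s_r1_13 (q : K) : QG.X K q (1 : Fin 2) (1 : Fin 4) * QG.X K q (1 : Fin 2) (3 : Fin 4) = q • (QG.X K q (1 : Fin 2) (3 : Fin 4) * QG.X K q (1 : Fin 2) (1 : Fin 4)) := by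
  have h := xrel q (QG.QMatRel.row 1 1 3 (by decide))
  simp only [map_mul, map_smul] at h
  exact h

private lemma s_r1_13' (q : K) : ∀ t, QG.X K q (1 : Fin 2) (1 : Fin 4) * (QG.X K q (1 : Fin 2) (3 : Fin 4) * t) = q • (QG.X K q (1 : Fin 2) (3 : Fin 4) * (QG.X K q (1 : Fin 2) (1 : Fin 4) * t)) := by
  intro t
  rw [← mul_assoc, s_r1_13 q, smul_mul_assoc, mul_assoc]

private lemma s_r1_23 (q : K) : QG.X K q (1 : Fin 2) (2 : Fin 4) * QG.X K q (1 : Fin 2) (3 : Fin 4) = q • (QG.X K q (1 : Fin 2) (3 : Fin 4) * QG.X K q (1 : Fin 2) (2 : Fin 4)) := by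
  have h := xrel q (QG.QMatRel.row 1 2 3 (by decide))
  simp only [map_mul, map_smul] at h
  exact h

private lemma s_r1_23' (q : K) : ∀ t, QG.X K q (1 : Fin 2) (2 : Fin 4) * (QG.X K q (1 : Fin 2) (3 : Fin 4) * t) = q • (QG.X K q (1 : Fin 2) (3 : Fin 4) * (QG.X K q (1 : Fin 2) (2 : Fin 4) * t)) := by
  intro t
  rw [← mul_assoc, s_r1_23 q, smul_mul_assoc, mul_assoc]

private lemma s_c0 (q : K) : QG.X K q (0 : Fin 2) (0 : Fin 4) * QG.X K q (1 : Fin 2) (0 : Fin 4) = q • (QG.X K q (1 : Fin 2) (0 : Fin 4) * QG.X K q (0 : Fin 2) (0 : Fin 4)) := by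
  have h := xrel q (QG.QMatRel.col 0 1 0 (by decide))
  simp only [map_mul, map_smul] at h
  exact h

private lemma s_c0' (q : K) : ∀ t, QG.X K q (0 : Fin 2) (0 : Fin 4) * (QG.X K q (1 : Fin 2) (0 : Fin 4) * t) = q • (QG.X K q (1 : Fin 2) (0 : Fin 4) * (QG.X K q (0 : Fin 2) (0 : Fin 4) * t)) := by
  intro t
  rw [← mul_assoc, s_c0 q, smul_mul_assoc, mul_assoc]

private lemma s_c1 (q : K) : QG.X K q (0 : Fin 2) (1 : Fin 4) * QG.X K q (1 : Fin 2) (1 : Fin 4) = q • (QG.X K q (1 : Fin 2) (1 : Fin 4) * QG.X K q (0 : Fin 2) (1 : Fin 4)) := by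
  have h := xrel q (QG.QMatRel.col 0 1 1 (by decide))
  simp only [map_mul, map_smul] at h
  exact h

private lemma s_c1' (q : K) : ∀ t, QG.X K q (0 : Fin 2) (1 : Fin 4) * (QG.X K q (1 : Fin 2) (1 : Fin 4) * t) = q • (QG.X K q (1 : Fin 2) (1 : Fin 4) * (QG.X K q (0 : Fin 2) (1 : Fin 4) * t)) := by
  intro t
  rw [← mul_assoc, s_c1 q, smul_mul_assoc, mul_assoc]

private lemma s_c2 (q : K) : QG.X K q (0 : Fin 2) (2 : Fin 4) * QG.X K q (1 : Fin 2) (2 : Fin 4) = q • (QG.X K q (1 : Fin 2) (2 : Fin 4) * QG.X K q (0 : Fin 2) (2 : Fin 4)) := by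
  have h := xrel q (QG.QMatRel.col 0 1 2 (by decide))
  simp only [map_mul, map_smul] at h
  exact h

private lemma s_c2' (q : K) : ∀ t, QG.X K q (0 : Fin 2) (2 : Fin 4) * (QG.X K q (1 : Fin 2) (2 : Fin 4) * t) = q • (QG.X K q (1 : Fin 2) (2 : Fin 4) * (QG.X K q (0 : Fin 2) (2 : Fin 4) * t)) := by
  intro t
  rw [← mul_assoc, s_c2 q, smul_mul_assoc, mul_assoc]

private lemma s_c3 (q : K) : QG.X K q (0 : Fin 2) (3 : Fin 4) * QG.X K q (1 : Fin 2) (3 : Fin 4) = q • (QG.X K q (1 : Fin 2) (3 : Fin 4) * QG.X K q (0 : Fin 2) (3 : Fin 4)) := by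
  have h := xrel q (QG.QMatRel.col 0 1 3 (by decide))
  simp only [map_mul, map_smul] at h
  exact h

private lemma s_c3' (q : K) : ∀ t, QG.X K q (0 : Fin 2) (3 : Fin 4) * (QG.X K q (1 : Fin 2) (3 : Fin 4) * t) = q • (QG.X K q (1 : Fin 2) (3 : Fin 4) * (QG.X K q (0 : Fin 2) (3 : Fin 4) * t)) := by
  intro t
  rw [← mul_assoc, s_c3 q, smul_mul_assoc, mul_assoc]

private lemma s_m01 (q : K) : QG.X K q (0 : Fin 2) (1 : Fin 4) * QG.X K q (1 : Fin 2) (0 : Fin 4) = QG.X K q (1 : Fin 2) (0 : Fin 4) * QG.X K q (0 : Fin 2) (1 : Fin 4) := by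
  have h := xrel q (QG.QMatRel.comm 1 0 0 1 (by decide) (by decide))
  simp only [map_mul] at h
  exact h.symm

private lemma s_m01' (q : K) : ∀ t, QG.X K q (0 : Fin 2) (1 : Fin 4) * (QG.X K q (1 : Fin 2) (0 : Fin 4) * t) = QG.X K q (1 : Fin 2) (0 : Fin 4) * (QG.X K q (0 : Fin 2) (1 : Fin 4) * t) := by
  intro t
  rw [← mul_assoc, s_m01 q, mul_assoc]

private lemma s_m02 (q : K) : QG.X K q (0 : Fin 2) (2 : Fin 4) * QG.X K q (1 : Fin 2) (0 : Fin 4) = QG.X K q (1 : Fin 2) (0 : Fin 4) * QG.X K q (0 : Fin 2) (2 : Fin 4) := by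
  have h := xrel q (QG.QMatRel.comm 1 0 0 2 (by decide) (by decide))
  simp only [map_mul] at h
  exact h.symm

private lemma s_m02' (q : K) : ∀ t, QG.X K q (0 : Fin 2) (2 : Fin 4) * (QG.X K q (1 : Fin 2) (0 : Fin 4) * t) = QG.X K q (1 : Fin 2) (0 : Fin 4) * (QG.X K q (0 : Fin 2) (2 : Fin 4) * t) := by
  intro t
  rw [← mul_assoc, s_m02 q, mul_assoc]

private lemma s_m03 (q : K) : QG.X K q (0 : Fin 2) (3 : Fin 4) * QG.X K q (1 : Fin 2) (0 : Fin 4) = QG.X K q (1 : Fin 2) (0 : Fin 4) * QG.X K q (0 : Fin 2) (3 : Fin 4) := by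
  have h := xrel q (QG.QMatRel.comm 1 0 0 3 (by decide) (by decide))
  simp only [map_mul] at h
  exact h.symm

private lemma s_m03' (q : K) : ∀ t, QG.X K q (0 : Fin 2) (3 : Fin 4) * (QG.X K q (1 : Fin 2) (0 : Fin 4) * t) = QG.X K q (1 : Fin 2) (0 : Fin 4) * (QG.X K q (0 : Fin 2) (3 : Fin 4) * t) := by
  intro t
  rw [← mul_assoc, s_m03 q, mul_assoc]

private lemma s_m12 (q : K) : QG.X K q (0 : Fin 2) (2 : Fin 4) * QG.X K q (1 : Fin 2) (1 : Fin 4) = QG.X K q (1 : Fin 2) (1 : Fin 4) * QG.X K q (0 : Fin 2) (2 : Fin 4) := by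
  have h := xrel q (QG.QMatRel.comm 1 0 1 2 (by decide) (by decide))
  simp only [map_mul] at h
  exact h.symm

private lemma s_m12' (q : K) : ∀ t, QG.X K q (0 : Fin 2) (2 : Fin 4) * (QG.X K q (1 : Fin 2) (1 : Fin 4) * t) = QG.X K q (1 : Fin 2) (1 : Fin 4) * (QG.X K q (0 : Fin 2) (2 : Fin 4) * t) := by
  intro t
  rw [← mul_assoc, s_m12 q, mul_assoc]

private lemma s_m13 (q : K) : QG.X K q (0 : Fin 2) (3 : Fin 4) * QG.X K q (1 : Fin 2) (1 : Fin 4) = QG.X K q (1 : Fin 2) (1 : Fin 4) * QG.X K q (0 : Fin 2) (3 : Fin 4) := by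
  have h := xrel q (QG.QMatRel.comm 1 0 1 3 (by decide) (by decide))
  simp only [map_mul] at h
  exact h.symm

private lemma s_m13' (q : K) : ∀ t, QG.X K q (0 : Fin 2) (3 : Fin 4) * (QG.X K q (1 : Fin 2) (1 : Fin 4) * t) = QG.X K q (1 : Fin 2) (1 : Fin 4) * (QG.X K q (0 : Fin 2) (3 : Fin 4) * t) := by
  intro t
  rw [← mul_assoc, s_m13 q, mul_assoc]

private lemma s_m23 (q : K) : QG.X K q (0 : Fin 2) (3 : Fin 4) * QG.X K q (1 : Fin 2) (2 : Fin 4) = QG.X K q (1 : Fin 2) (2 : Fin 4) * QG.X K q (0 : Fin 2) (3 : Fin 4) := by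
  have h := xrel q (QG.QMatRel.comm 1 0 2 3 (by decide) (by decide))
  simp only [map_mul] at h
  exact h.symm

private lemma s_m23' (q : K) : ∀ t, QG.X K q (0 : Fin 2) (3 : Fin 4) * (QG.X K q (1 : Fin 2) (2 : Fin 4) * t) = QG.X K q (1 : Fin 2) (2 : Fin 4) * (QG.X K q (0 : Fin 2) (3 : Fin 4) * t) := by
  intro t
  rw [← mul_assoc, s_m23 q, mul_assoc]

private lemma s_q01 (q : K) : QG.X K q (0 : Fin 2) (0 : Fin 4) * QG.X K q (1 : Fin 2) (1 : Fin 4) = QG.X K q (1 : Fin 2) (1 : Fin 4) * QG.X K q (0 : Fin 2) (0 : Fin 4) + (q - q⁻¹) • (QG.X K q (0 : Fin 2) (1 : Fin 4) * QG.X K q (1 : Fin 2) (0 : Fin 4)) := by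
  have h := xrel q (QG.QMatRel.qrel 0 1 0 1 (by decide) (by decide))
  simp only [map_sub, map_mul, map_smul] at h
  exact sub_eq_iff_eq_add'.mp h

private lemma s_q01' (q : K) : ∀ t, QG.X K q (0 : Fin 2) (0 : Fin 4) * (QG.X K q (1 : Fin 2) (1 : Fin 4) * t) = QG.X K q (1 : Fin 2) (1 : Fin 4) * (QG.X K q (0 : Fin 2) (0 : Fin 4) * t) + (q - q⁻¹) • (QG.X K q (0 : Fin 2) (1 : Fin 4) * (QG.X K q (1 : Fin 2) (0 : Fin 4) * t)) := by
  intro t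
  rw [← mul_assoc, s_q01 q, add_mul, smul_mul_assoc, mul_assoc, mul_assoc]

private lemma s_q02 (q : K) : QG.X K q (0 : Fin 2) (0 : Fin 4) * QG.X K q (1 : Fin 2) (2 : Fin 4) = QG.X K q (1 : Fin 2) (2 : Fin 4) * QG.X K q (0 : Fin 2) (0 : Fin 4) + (q - q⁻¹) • (QG.X K q (0 : Fin 2) (2 : Fin 4) * QG.X K q (1 : Fin 2) (0 : Fin 4)) := by
  have h := xrel q (QG.QMatRel.qrel 0 1 0 2 (by decide) (by decide))
  simp only [map_sub, map_mul, map_smul] at h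
  exact sub_eq_iff_eq_add'.mp h

private lemma s_q02' (q : K) : ∀ t, QG.X K q (0 : Fin 2) (0 : Fin 4) * (QG.X K q (1 : Fin 2) (2 : Fin 4) * t) = QG.X K q (1 : Fin 2) (2 : Fin 4) * (QG.X K q (0 : Fin 2) (0 : Fin 4) * t) + (q - q⁻¹) • (QG.X K q (0 : Fin 2) (2 : Fin 4) * (QG.X K q (1 : Fin 2) (0 : Fin 4) * t)) := by
  intro t
  rw [← mul_assoc, s_q02 q, add_mul, smul_mul_assoc, mul_assoc, mul_assoc]

private lemma s_q03 (q : K) : QG.X K q (0 : Fin 2) (0 : Fin 4) * QG.X K q (1 : Fin 2) (3 : Fin 4) = QG.X K q (1 : Fin 2) (3 : Fin 4) * QG.X K q (0 : Fin 2) (0 : Fin 4) + (q - q⁻¹) • (QG.X K q (0 : Fin 2) (3 : Fin 4) * QG.X K q (1 : Fin 2) (0 : Fin 4)) := by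
  have h := xrel q (QG.QMatRel.qrel 0 1 0 3 (by decide) (by decide))
  simp only [map_sub, map_mul, map_smul] at h
  exact sub_eq_iff_eq_add'.mp h

private lemma s_q03' (q : K) : ∀ t, QG.X K q (0 : Fin 2) (0 : Fin 4) * (QG.X K q (1 : Fin 2) (3 : Fin 4) * t) = QG.X K q (1 : Fin 2) (3 : Fin 4) * (QG.X K q (0 : Fin 2) (0 : Fin 4) * t) + (q - q⁻¹) • (QG.X K q (0 : Fin 2) (3 : Fin 4) * (QG.X K q (1 : Fin 2) (0 : Fin 4) * t)) := by
  intro t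
  rw [← mul_assoc, s_q03 q, add_mul, smul_mul_assoc, mul_assoc, mul_assoc]

private lemma s_q12 (q : K) : QG.X K q (0 : Fin 2) (1 : Fin 4) * QG.X K q (1 : Fin 2) (2 : Fin 4) = QG.X K q (1 : Fin 2) (2 : Fin 4) * QG.X K q (0 : Fin 2) (1 : Fin 4) + (q - q⁻¹) • (QG.X K q (0 : Fin 2) (2 : Fin 4) * QG.X K q (1 : Fin 2) (1 : Fin 4)) := by
  have h := xrel q (QG.QMatRel.qrel 0 1 1 2 (by decide) (by decide))
  simp only [map_sub, map_mul, map_smul] at h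
  exact sub_eq_iff_eq_add'.mp h

private lemma s_q12' (q : K) : ∀ t, QG.X K q (0 : Fin 2) (1 : Fin 4) * (QG.X K q (1 : Fin 2) (2 : Fin 4) * t) = QG.X K q (1 : Fin 2) (2 : Fin 4) * (QG.X K q (0 : Fin 2) (1 : Fin 4) * t) + (q - q⁻¹) • (QG.X K q (0 : Fin 2) (2 : Fin 4) * (QG.X K q (1 : Fin 2) (1 : Fin 4) * t)) := by
  intro t
  rw [← mul_assoc, s_q12 q, add_mul, smul_mul_assoc, mul_assoc, mul_assoc]

private lemma s_q13 (q : K) : QG.X K q (0 : Fin 2) (1 : Fin 4) * QG.X K q (1 : Fin 2) (3 : Fin 4) = QG.X K q (1 : Fin 2) (3 : Fin 4) * QG.X K q (0 : Fin 2) (1 : Fin 4) + (q - q⁻¹) • (QG.X K q (0 : Fin 2) (3 : Fin 4) * QG.X K q (1 : Fin 2) (1 : Fin 4)) := by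
  have h := xrel q (QG.QMatRel.qrel 0 1 1 3 (by decide) (by decide))
  simp only [map_sub, map_mul, map_smul] at h
  exact sub_eq_iff_eq_add'.mp h

private lemma s_q13' (q : K) : ∀ t, QG.X K q (0 : Fin 2) (1 : Fin 4) * (QG.X K q (1 : Fin 2) (3 : Fin 4) * t) = QG.X K q (1 : Fin 2) (3 : Fin 4) * (QG.X K q (0 : Fin 2) (1 : Fin 4) * t) + (q - q⁻¹) • (QG.X K q (0 : Fin 2) (3 : Fin 4) * (QG.X K q (1 : Fin 2) (1 : Fin 4) * t)) := by
  intro t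
  rw [← mul_assoc, s_q13 q, add_mul, smul_mul_assoc, mul_assoc, mul_assoc]

private lemma s_q23 (q : K) : QG.X K q (0 : Fin 2) (2 : Fin 4) * QG.X K q (1 : Fin 2) (3 : Fin 4) = QG.X K q (1 : Fin 2) (3 : Fin 4) * QG.X K q (0 : Fin 2) (2 : Fin 4) + (q - q⁻¹) • (QG.X K q (0 : Fin 2) (3 : Fin 4) * QG.X K q (1 : Fin 2) (2 : Fin 4)) := by
  have h := xrel q (QG.QMatRel.qrel 0 1 2 3 (by decide) (by decide))
  simp only [map_sub, map_mul, map_smul] at h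
  exact sub_eq_iff_eq_add'.mp h

private lemma s_q23' (q : K) : ∀ t, QG.X K q (0 : Fin 2) (2 : Fin 4) * (QG.X K q (1 : Fin 2) (3 : Fin 4) * t) = QG.X K q (1 : Fin 2) (3 : Fin 4) * (QG.X K q (0 : Fin 2) (2 : Fin 4) * t) + (q - q⁻¹) • (QG.X K q (0 : Fin 2) (3 : Fin 4) * (QG.X K q (1 : Fin 2) (2 : Fin 4) * t)) := by
  intro t
  rw [← mul_assoc, s_q23 q, add_mul, smul_mul_assoc, mul_assoc, mul_assoc]


private lemma idI (hq : q ≠ 0) :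
    QG.pl K q 0 1 * QG.pl K q 2 3 = (q^2) • (QG.pl K q 2 3 * QG.pl K q 0 1) := by
  simp only [QG.pl, mul_sub, sub_mul, smul_sub, smul_smul, mul_smul_comm, smul_mul_assoc,
    mul_add, add_mul, smul_add, mul_assoc]
  simp only [s_r0_01 q, s_r0_01' q, s_r0_02 q, s_r0_02' q, s_r0_03 q, s_r0_03' q, s_r0_12 q, s_r0_12' q, s_r0_13 q, s_r0_13' q, s_r0_23 q, s_r0_23' q, s_r1_01 q, s_r1_01' q, s_r1_02 q, s_r1_02' q, s_r1_03 q, s_r1_03' q, s_r1_12 q, s_r1_12' q, s_r1_13 q, s_r1_13' q, s_r1_23 q, s_r1_23' q, s_c0 q, s_c0' q, s_c1 q, s_c1' q, s_c2 q, s_c2' q, s_c3 q, s_c3' q, s_m01 q, s_m01' q, s_m02 q, s_m02' q, s_m03 q, s_m03' q, s_m12 q, s_m12' q, s_m13 q, s_m13' q, s_m23 q, s_m23' q, s_q01 q, s_q01' q, s_q02 q, s_q02' q, s_q03 q, s_q03' q, s_q12 q, s_q12' q, s_q13 q, s_q13' q, s_q23 q, s_q23' q, smul_add, smul_sub, smul_smul,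 mul_add, add_mul, mul_smul_comm,
    smul_mul_assoc, mul_assoc]
  match_scalars <;> (try field_simp) <;> (try ring)

private lemma idII (hq : q ≠ 0) :
    QG.pl K q 1 2 * QG.pl K q 0 3 = QG.pl K q 0 3 * QG.pl K q 1 2 := by
  simp only [QG.pl, mul_sub, sub_mul, smul_sub, smul_smul, mul_smul_comm, smul_mul_assoc,
    mul_add, add_mul, smul_add, mul_assoc]
  simp only [s_r0_01 q, s_r0_01' q, s_r0_02 q, s_r0_02' q, s_r0_03 q, s_r0_03' q, s_r0_12 q, s_r0_12' q, s_r0_13 q, s_r0_13' q, s_r0_23 q, s_r0_23' q, s_r1_01 q, s_r1_01' q, s_r1_02 q, s_r1_02' q, s_r1_03 q, s_r1_03' q, s_r1_12 q, s_r1_12' q, s_r1_13 q, s_r1_13' q, s_r1_23 q, s_r1_23' q, s_c0 q, s_c0' q, s_c1 q, s_c1' q, s_c2 q, s_c2' q, s_c3 q, s_c3' q, s_m01 q, s_m01' q, s_m02 q, s_m02' q, s_m03 q, s_m03' q, s_m12 q, s_m12' q, s_m13 q, s_m13' q, s_m23 q, s_m23' q, s_q01 q, s_q01' q, s_q02 q,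 s_q02' q, s_q03 q, s_q03' q, s_q12 q, s_q12' q, s_q13 q, s_q13' q, s_q23 q, s_q23' q, smul_add, smul_sub, smul_smul, mul_add, add_mul, mul_smul_comm,
    smul_mul_assoc, mul_assoc]
  match_scalars <;> (try field_simp) <;> (try ring)

end Straight

end QGW

/-- If `q² ≠ 1` then `[23][14] − q[24][13] + q²[12][34] ≠ 0` in
`O_q(G(2,4))` (0-based: `[12][03] − q[13][02] + q²[01][23] ≠ 0`).  Consequently there is
no `K`-algebra automorphism of `O_q(G(2,4))` sending each quantum minor `[ij]` to
`[(i+1)(j+1)]` with indices read modulo `4`. -/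
theorem cycling_is_not_an_automorphism
    (K : Type*) [Field K] (q : K) (hq : q ≠ 0) (hq2 : q ^ 2 ≠ 1) :
    pl K q 1 2 * pl K q 0 3 - q • (pl K q 1 3 * pl K q 0 2)
        + q ^ 2 • (pl K q 0 1 * pl K q 2 3) ≠ 0 ∧
    ¬ ∃ φ : ↥(qGrass24 K q) ≃ₐ[K] ↥(qGrass24 K q),
        ∀ (a b : Fin 4) (h : a < b),
          φ (grGen24 K q a b h) =
            if hb : b = 3 then
              grGen24 K q 0 (a + 1) (by subst hb; revert a; decide)
            else
              grGen24 K q (a + 1) (b + 1) (by revert a b; decide) := by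
  constructor
  · -- Part 1: the element is nonzero
    intro h0
    have h1 := congrArg
      (fun z => QGRep.Phi K q hq z (QGRep.delta K)
        ((1:ℤ),(0:ℤ),(1:ℤ),(0:ℤ),(0:ℤ),(1:ℤ),(0:ℤ),(1:ℤ))) h0
    simp only [map_zero, LinearMap.zero_apply, Pi.zero_apply] at h1
    rw [QGRep.phiE_val K q hq] at h1
    have h2 : q ^ 2 * (q ^ 2 - 1) = 0 := by linear_combination h1
    rcases mul_eq_zero.mp h2 with h | h
    · exact pow_ne_zero 2 hq h
    · exact sub_ne_zero.mpr hq2 h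
  · -- Part 2: no such automorphism
    rintro ⟨φ, hφ⟩
    have hg01 : φ (grGen24 K q 0 1 (by decide)) = grGen24 K q 1 2 (by decide) := by
      have h := hφ 0 1 (by decide)
      rwa [dif_neg (by decide)] at h
    have hg23 : φ (grGen24 K q 2 3 (by decide)) = grGen24 K q 0 3 (by decide) := by
      have h := hφ 2 3 (by decide)
      rwa [dif_pos rfl] at h
    have hIa : grGen24 K q 0 1 (by decide) * grGen24 K q 2 3 (by decide)
        = (q ^ 2) • (grGen24 K q 2 3 (by decide) * grGen24 K q 0 1 (by decide)) :=
      Subtype.ext (QGW.idI q hq)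
    have h2 := congrArg φ hIa
    simp only [map_mul, map_smul, hg01, hg23] at h2
    have hIIa : grGen24 K q 1 2 (by decide) * grGen24 K q 0 3 (by decide)
        = grGen24 K q 0 3 (by decide) * grGen24 K q 1 2 (by decide) :=
      Subtype.ext (QGW.idII q hq)
    rw [hIIa] at h2
    have hval := congrArg Subtype.val h2
    simp only [MulMemClass.coe_mul, SetLike.val_smul, grGen24] at hval
    have hne : (q ^ 2 - 1 : K) ≠ 0 := sub_ne_zero.mpr hq2
    have h3 : (q ^ 2 - 1 : K) • (pl K q 0 3 * pl K q 1 2) = 0 := by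
      have h' : pl K q 0 3 * pl K q 1 2 - q ^ 2 • (pl K q 0 3 * pl K q 1 2) = 0 :=
        sub_eq_zero.mpr hval
      have hm : (q ^ 2 - 1 : K) • (pl K q 0 3 * pl K q 1 2)
          = -(pl K q 0 3 * pl K q 1 2 - q ^ 2 • (pl K q 0 3 * pl K q 1 2)) := by module
      rw [hm, h', neg_zero]
    have h5 : pl K q 0 3 * pl K q 1 2 = 0 := by
      have h4 := congrArg (fun z => (q ^ 2 - 1 : K)⁻¹ • z) h3
      simp only [smul_smul, inv_mul_cancel₀ hne, one_smul, smul_zero] at h4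
      exact h4
    have h6 := congrArg
      (fun z => QGRep.Phi K q hq z (QGRep.delta K)
        ((1:ℤ),(1:ℤ),(0:ℤ),(0:ℤ),(0:ℤ),(0:ℤ),(1:ℤ),(1:ℤ))) h5
    simp only [map_zero, LinearMap.zero_apply, Pi.zero_apply] at h6
    rw [QGRep.phiG_val K q hq] at h6
    exact hq h6

end QG
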